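/- Let 𝒮 be a nonempty set of positive definite density matrices on ℂ^n, let U_1,…,U_m be unitaries on ℂ^n such that U_k† σ U_k ∈ 𝒮 for every σ ∈ 𝒮 and every k, and let (p_1,…,p_m) be a probability vector. Define Λ(ρ) = ∑_k p_k U_k ρ U_k†. Then for every density matrix ρ on ℂ^n: inf_{σ∈𝒮} ( −tr(Λ(ρ) log₂ σ) ) ≥ inf_{σ∈𝒮} ( −tr(ρ log₂ σ) ). Equivalently, the function f(τ) = inf_{σ∈𝒮} S(τ‖σ) + S(τ) is nondecreasing under Λ. -/

import Mathlib

open Matrix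
open scoped Kronecker ComplexOrder

/-- von Neumann entropy in bits (with convention `0 * log₂ 0 = 0`). -/
noncomputable def vnEntropy {n : Type*} [Fintype n] [DecidableEq n] (A : Matrix n n ℂ) : ℝ :=
  if h : A.IsHermitian then -∑ i, h.eigenvalues i * Real.logb 2 (h.eigenvalues i) else 0

/-- `log₂` of a Hermitian matrix via the spectral functional calculus. -/
noncomputable def matLog2 {n : Type*} [Fintype n] [DecidableEq n] (A : Matrix n n ℂ) :
    Matrix n n ℂ :=
  if h : A.IsHermitian then h.cfc (Real.logb 2) else 0

/-- relative entropy `S(ρ‖σ) = tr(ρ log₂ ρ) − tr(ρ log₂ σ)` (in bits). -/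
noncomputable def relEnt {n : Type*} [Fintype n] [DecidableEq n] (ρ σ : Matrix n n ℂ) : ℝ :=
  ((ρ * matLog2 ρ).trace).re - ((ρ * matLog2 σ).trace).re

section Aux

variable {N : Type*} [Fintype N] [DecidableEq N]

/-- conjugation by a unitary as a star algebra homomorphism -/
noncomputable def conjSAH (U : Matrix N N ℂ) (hU : U ∈ Matrix.unitaryGroup N ℂ) :
    Matrix N N ℂ →⋆ₐ[ℂ] Matrix N N ℂ where
  toFun A := Uᴴ * A * U
  map_one' := by
    show Uᴴ * 1 * U = 1
    rw [mul_one, ← star_eq_conjTranspose]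
    exact Unitary.star_mul_self_of_mem hU
  map_mul' A B := by
    have h1 : U * Uᴴ = 1 := by
      rw [← star_eq_conjTranspose]; exact Unitary.mul_star_self_of_mem hU
    calc Uᴴ * (A * B) * U = Uᴴ * (A * ((U * Uᴴ) * B)) * U := by rw [h1, one_mul]
      _ = Uᴴ * A * U * (Uᴴ * B * U) := by noncomm_ring
  map_zero' := by simp
  map_add' A B := by noncomm_ring
  commutes' c := by
    have h1 : Uᴴ * U = 1 := by
      rw [← star_eq_conjTranspose]; exact Unitary.star_mul_self_of_mem hU
    simp [Algebra.algebraMap_eq_smul_one, mul_smul_comm, smul_mul_assoc, h1]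
  map_star' A := by
    simp [star_eq_conjTranspose, conjTranspose_mul, mul_assoc]

lemma conjSAH_continuous (U : Matrix N N ℂ) (hU : U ∈ Matrix.unitaryGroup N ℂ) :
    Continuous (conjSAH U hU) :=
  (continuous_const.matrix_mul continuous_id).matrix_mul continuous_const

lemma matLog2_conj (U : Matrix N N ℂ) (hU : U ∈ Matrix.unitaryGroup N ℂ)
    {A : Matrix N N ℂ} (hA : A.IsHermitian) :
    matLog2 (Uᴴ * A * U) = Uᴴ * matLog2 A * U := by
  have hA' : (Uᴴ * A * U).IsHermitian := by
    rw [Matrix.IsHermitian] at hA ⊢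
    simp [conjTranspose_mul, mul_assoc, hA]
  have hsa : IsSelfAdjoint A := hA
  have hsa' : IsSelfAdjoint (conjSAH U hU A) := hA'
  have hcfc := StarAlgHomClass.map_cfc (conjSAH U hU) (Real.logb 2) A
    (Matrix.finite_real_spectrum.continuousOn _) (conjSAH_continuous U hU) hsa hsa'
  rw [matLog2, matLog2, dif_pos hA, dif_pos hA', ← Matrix.IsHermitian.cfc_eq,
    ← Matrix.IsHermitian.cfc_eq]
  exact hcfc.symm

/-- the trace of a PSD matrix has nonnegative real part -/
lemma psd_trace_re_nonneg {M : Matrix N N ℂ} (hM : M.PosSemidef) : 0 ≤ M.trace.re := by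
  rw [Matrix.trace]
  have : ∀ i, 0 ≤ (M i i).re := by
    intro i
    have := hM.re_dotProduct_nonneg (Pi.single i 1)
    simpa [dotProduct, Matrix.mulVec, Pi.single_apply, Finset.sum_ite_eq,
      Finset.sum_ite_eq'] using this
  calc (0:ℝ) ≤ ∑ i, (M i i).re := Finset.sum_nonneg fun i _ => this i
    _ = (∑ i, Matrix.diag M i).re := by
        rw [Complex.re_sum]; rfl

lemma trace_mul_re_nonpos {ρ' L : Matrix N N ℂ} (hρ' : ρ'.PosSemidef)
    (hL : (-L).PosSemidef) : ((ρ' * L).trace).re ≤ 0 := by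
  obtain ⟨B, rfl⟩ : ∃ B : Matrix N N ℂ, ρ' = Bᴴ * B := by
    open scoped MatrixOrder in
    exact CStarAlgebra.nonneg_iff_eq_star_mul_self.mp hρ'.nonneg
  have h1 : (Bᴴ * B * L).trace = (B * L * Bᴴ).trace := by
    rw [Matrix.trace_mul_cycle, Matrix.trace_mul_cycle]
  have h2 : (B * L * Bᴴ) = -(B * (-L) * Bᴴ) := by noncomm_ring
  have h3 := psd_trace_re_nonneg (hL.mul_mul_conjTranspose_same B)
  rw [h1, h2, Matrix.trace_neg, Complex.neg_re]
  linarith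

/-- `-log₂ σ` is PSD for a positive definite density matrix σ. -/
lemma neg_matLog2_posSemidef {σ : Matrix N N ℂ} (hσ : σ.PosDef) (htr : σ.trace = 1) :
    (-(matLog2 σ)).PosSemidef := by
  have hh : σ.IsHermitian := hσ.isHermitian
  -- sum of eigenvalues is 1
  have htrace : σ.trace = ∑ i, (hh.eigenvalues i : ℂ) := by
    conv_lhs => rw [hh.spectral_theorem, Unitary.conjStarAlgAut_apply]
    rw [Matrix.trace_mul_cycle]
    rw [show star (hh.eigenvectorUnitary : Matrix N N ℂ) *
        (hh.eigenvectorUnitary : Matrix N N ℂ) = 1 from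
      Unitary.star_mul_self_of_mem hh.eigenvectorUnitary.2]
    simp [Matrix.trace_diagonal]
  have hsum : ∑ i, hh.eigenvalues i = 1 := by
    have := htrace.symm.trans htr
    have := congrArg Complex.re this
    simpa [Complex.re_sum] using this
  have hle1 : ∀ i, hh.eigenvalues i ≤ 1 := by
    intro i
    rw [← hsum]
    exact Finset.single_le_sum (fun j _ => (hσ.eigenvalues_pos j).le) (Finset.mem_univ i)
  have hlog_nonpos : ∀ i, Real.logb 2 (hh.eigenvalues i) ≤ 0 := fun i =>
    Real.logb_nonpos one_lt_two (hσ.eigenvalues_pos i).le (hle1 i)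
  rw [matLog2, dif_pos hh, Matrix.IsHermitian.cfc, Unitary.conjStarAlgAut_apply]
  have : -((hh.eigenvectorUnitary : Matrix N N ℂ) *
      Matrix.diagonal (RCLike.ofReal ∘ Real.logb 2 ∘ hh.eigenvalues) *
      star (hh.eigenvectorUnitary : Matrix N N ℂ)) =
      (hh.eigenvectorUnitary : Matrix N N ℂ) *
      Matrix.diagonal (fun i => ((-Real.logb 2 (hh.eigenvalues i) : ℝ) : ℂ)) *
      (hh.eigenvectorUnitary : Matrix N N ℂ)ᴴ := by
    rw [← star_eq_conjTranspose]
    rw [show Matrix.diagonal (fun i => ((-Real.logb 2 (hh.eigenvalues i) : ℝ) : ℂ)) =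
      -Matrix.diagonal (RCLike.ofReal ∘ Real.logb 2 ∘ hh.eigenvalues) by
        ext i j
        by_cases h : i = j
        · subst h; simp
        · simp [Matrix.diagonal_apply_ne _ h]]
    noncomm_ring
  rw [this]
  refine Matrix.PosSemidef.mul_mul_conjTranspose_same ?_ _
  refine Matrix.posSemidef_diagonal_iff.mpr fun i => ?_
  rw [Complex.zero_le_real]
  linarith [hlog_nonpos i]

end Aux

/-- Let `𝒮` be a nonempty set of positive definite density matrices on ℂ^n,
`U_1,…,U_m` unitaries with `U_k† σ U_k ∈ 𝒮` for all `σ ∈ 𝒮` and all `k`, and `(p_k)` a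
probability vector. For `Λ(ρ) = ∑_k p_k U_k ρ U_k†` and every density matrix ρ:
`inf_{σ∈𝒮} (−tr(Λ(ρ) log₂ σ)) ≥ inf_{σ∈𝒮} (−tr(ρ log₂ σ))`. -/
theorem inf_neg_trace_log_nondecreasing_under_random_unitaries
    {n m : ℕ}
    (𝒮 : Set (Matrix (Fin n) (Fin n) ℂ))
    (h𝒮ne : 𝒮.Nonempty)
    (h𝒮 : ∀ σ ∈ 𝒮, σ.PosDef ∧ σ.trace = 1)
    (U : Fin m → Matrix (Fin n) (Fin n) ℂ)
    (hU : ∀ k, U k ∈ Matrix.unitaryGroup (Fin n) ℂ)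
    (hUinv : ∀ k, ∀ σ ∈ 𝒮, (U k)ᴴ * σ * U k ∈ 𝒮)
    (p : Fin m → ℝ) (hp : ∀ k, 0 ≤ p k) (hpsum : ∑ k, p k = 1)
    (Λ : Matrix (Fin n) (Fin n) ℂ → Matrix (Fin n) (Fin n) ℂ)
    (hΛ : ∀ τ, Λ τ = ∑ k, (p k : ℂ) • (U k * τ * (U k)ᴴ))
    (ρ : Matrix (Fin n) (Fin n) ℂ) (hρ : ρ.PosSemidef) (hρtr : ρ.trace = 1) :
    sInf {r : ℝ | ∃ σ ∈ 𝒮, r = -((Λ ρ * matLog2 σ).trace).re} ≥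
      sInf {r : ℝ | ∃ σ ∈ 𝒮, r = -((ρ * matLog2 σ).trace).re} := by
  set B : Set ℝ := {r : ℝ | ∃ σ ∈ 𝒮, r = -((ρ * matLog2 σ).trace).re} with hBdef
  obtain ⟨σ₀, hσ₀⟩ := h𝒮ne
  have hBne : B.Nonempty := ⟨_, σ₀, hσ₀, rfl⟩
  have hBbdd : BddBelow B := by
    refine ⟨0, ?_⟩
    rintro r ⟨σ, hσ, rfl⟩
    rw [neg_nonneg]
    exact trace_mul_re_nonpos hρ (neg_matLog2_posSemidef (h𝒮 σ hσ).1 (h𝒮 σ hσ).2)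
  refine le_csInf ⟨_, σ₀, hσ₀, rfl⟩ ?_
  rintro a ⟨σ, hσ, rfl⟩
  -- key trace computation
  have hkey : ((Λ ρ * matLog2 σ).trace).re =
      ∑ k, p k * ((ρ * matLog2 ((U k)ᴴ * σ * U k)).trace).re := by
    rw [hΛ, Finset.sum_mul]
    simp_rw [smul_mul_assoc]
    rw [Matrix.trace_sum, Complex.re_sum]
    simp_rw [Matrix.trace_smul, smul_eq_mul, Complex.re_ofReal_mul]
    refine Finset.sum_congr rfl fun k _ => ?_
    have e1 : (U k * ρ * (U k)ᴴ * matLog2 σ).trace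
        = (ρ * ((U k)ᴴ * matLog2 σ * U k)).trace := by
      rw [show U k * ρ * (U k)ᴴ * matLog2 σ = U k * (ρ * ((U k)ᴴ * matLog2 σ)) from by
        noncomm_ring, Matrix.trace_mul_comm, show ρ * ((U k)ᴴ * matLog2 σ) * U k
        = ρ * ((U k)ᴴ * matLog2 σ * U k) from by noncomm_ring]
    rw [matLog2_conj (U k) (hU k) (h𝒮 σ hσ).1.isHermitian, e1]
  have hneg : -(∑ k, p k * ((ρ * matLog2 ((U k)ᴴ * σ * U k)).trace).re)
      = ∑ k, p k * -((ρ * matLog2 ((U k)ᴴ * σ * U k)).trace).re := by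
    rw [← Finset.sum_neg_distrib]
    exact Finset.sum_congr rfl fun k _ => (mul_neg _ _).symm
  rw [hkey, hneg]
  calc sInf B = ∑ k, p k * sInf B := by rw [← Finset.sum_mul, hpsum, one_mul]
    _ ≤ ∑ k, p k * -((ρ * matLog2 ((U k)ᴴ * σ * U k)).trace).re :=
      Finset.sum_le_sum fun k _ => mul_le_mul_of_nonneg_left
        (csInf_le hBbdd ⟨(U k)ᴴ * σ * U k, hUinv k σ hσ, rfl⟩) (hp k)
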